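/- Let φ be the morphism from binary strings over {0,1} to strings over {a,b} defined by φ(0) = abababaabaababa and φ(1) = abababaababaaba (each image has length 15). For every nonempty string S over {0,1}, the string aba is a cover of φ(S). In particular, φ(S) has a proper cover, i.e., φ(S) is not superprimitive. -/

import Mathlib

section Defs

variable {α : Type*}

/-- `C` occurs in `T` at starting position `i`. -/
def OccursAt (C T : List α) (i : ℕ) : Prop :=
  i + C.length ≤ T.length ∧ (T.drop i).take C.length = C

/-- `C` is a cover of `T`: `C` occurs in `T` and every position of `T`
lies within an occurrence of `C`. -/
def IsCover (C T : List α) : Prop :=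
  (∃ i, OccursAt C T i) ∧
    ∀ q, q < T.length → ∃ i, OccursAt C T i ∧ i ≤ q ∧ q < i + C.length

/-- A border of `T` is both a prefix and a suffix of `T`. -/
def IsBorder (B T : List α) : Prop := B <+: T ∧ B <:+ T

/-- `p` is a period of `U`: `U[i] = U[i+p]` for all `0 ≤ i < |U| - p`. -/
def IsPeriod (p : ℕ) (U : List α) : Prop :=
  0 < p ∧ ∀ i, i + p < U.length → U[i]? = U[i + p]?

/-- `U` is aperiodic: its smallest period `p` satisfies `2p > |U|`
(equivalently, every period `p` of `U` satisfies `2p > |U|`). -/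
def StrAperiodic (U : List α) : Prop := ∀ p, IsPeriod p U → U.length < 2 * p

/-- A nonempty string `X` is primitive if `X = Y^t` implies `t = 1`. -/
def StrPrimitive (X : List α) : Prop :=
  X ≠ [] ∧ ∀ (Y : List α) (t : ℕ), X = (List.replicate t Y).flatten → t = 1

/-- A string is superprimitive if it has no proper cover. -/
def Superprimitive (T : List α) : Prop :=
  ¬ ∃ C : List α, IsCover C T ∧ C.length < T.length

/-- The length of the shortest cover of `T`. -/
noncomputable def covLen (T : List α) : ℕ :=
  sInf {c | ∃ C : List α, C.length = c ∧ IsCover C T}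

/-- `{a, a+p, ..., a+(t-1)p}` is a maximal arithmetic progression with
difference `p` inside the set `S`. -/
def MaxProg (S : Set ℕ) (p a t : ℕ) : Prop :=
  0 < t ∧ (∀ r, r < t → a + r * p ∈ S) ∧ (∀ b, b + p = a → b ∉ S) ∧ a + t * p ∉ S

end Defs

/-- The letter `a`. -/
def la : Bool := true
/-- The letter `b`. -/
def lb : Bool := false

/-- `φ(0) = abababa·aba·ababa`. -/
def phi0 : List Bool := [la,lb,la,lb,la,lb,la, la,lb,la, la,lb,la,lb,la]
/-- `φ(1) = abababa·ababa·aba`. -/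
def phi1 : List Bool := [la,lb,la,lb,la,lb,la, la,lb,la,lb,la, la,lb,la]

/-- The morphism `φ` on letters (`false` = 0, `true` = 1). -/
def phi (s : Bool) : List Bool := if s then phi1 else phi0

/-- `φ` applied letter by letter to a binary string. -/
def phiStr (S : List Bool) : List Bool := (S.map phi).flatten

/-- `B` is a binary de Bruijn sequence of order `k`: it has length `2^k + k - 1`
and every length-`k` binary string occurs in it exactly once. -/
def DeBruijn (k : ℕ) (B : List Bool) : Prop :=
  B.length = 2 ^ k + k - 1 ∧ ∀ W : List Bool, W.length = k → ∃! i, OccursAt W B i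

/-- For every nonempty binary string `S`, `aba` is a cover of `φ(S)`;
in particular `φ(S)` has a proper cover, i.e. it is not superprimitive. -/

lemma occ_append_left {α : Type*} {C X : List α} (Y : List α) {i : ℕ}
    (h : OccursAt C X i) : OccursAt C (X ++ Y) i := by
  obtain ⟨h1, h2⟩ := h
  refine ⟨by simp; omega, ?_⟩
  rw [List.drop_append_of_le_length (by omega),
      List.take_append_of_le_length (by simp; omega), h2]

lemma occ_append_right {α : Type*} {C Y : List α} (X : List α) {i : ℕ}
    (h : OccursAt C Y i) : OccursAt C (X ++ Y) (X.length + i) := by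
  obtain ⟨h1, h2⟩ := h
  refine ⟨by simp; omega, ?_⟩
  rw [List.drop_append, List.drop_eq_nil_of_le (by simp), List.nil_append, Nat.add_sub_cancel_left, h2]

lemma cover_append {α : Type*} {C X Y : List α}
    (hX : IsCover C X) (hY : IsCover C Y) : IsCover C (X ++ Y) := by
  obtain ⟨⟨i0, hi0⟩, hXc⟩ := hX
  obtain ⟨_, hYc⟩ := hY
  refine ⟨⟨i0, occ_append_left Y hi0⟩, ?_⟩
  intro q hq
  simp only [List.length_append] at hq
  by_cases hc : q < X.length
  · obtain ⟨i, ho, h1, h2⟩ := hXc q hc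
    exact ⟨i, occ_append_left Y ho, h1, h2⟩
  · obtain ⟨i, ho, h1, h2⟩ := hYc (q - X.length) (by omega)
    exact ⟨X.length + i, occ_append_right X ho, by omega, by omega⟩

lemma cover_phi (s : Bool) : IsCover [la, lb, la] (phi s) := by
  cases s <;>
  · refine ⟨⟨0, by decide, by decide⟩, ?_⟩
    intro q hq
    have hq15 : q < 15 := by simpa [phi, phi0, phi1] using hq
    interval_cases q <;>
      first
        | exact ⟨0, ⟨by decide, by decide⟩, by decide, by decide⟩
        | exact ⟨2, ⟨by decide, by decide⟩, by decide, by decide⟩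
        | exact ⟨4, ⟨by decide, by decide⟩, by decide, by decide⟩
        | exact ⟨7, ⟨by decide, by decide⟩, by decide, by decide⟩
        | exact ⟨9, ⟨by decide, by decide⟩, by decide, by decide⟩
        | exact ⟨10, ⟨by decide, by decide⟩, by decide, by decide⟩
        | exact ⟨12, ⟨by decide, by decide⟩, by decide, by decide⟩

lemma cover_phiStr (S : List Bool) (hS : S ≠ []) :
    IsCover [la, lb, la] (phiStr S) := by
  induction S with
  | nil => exact absurd rfl hS
  | cons s T ih =>
    rcases T with _ | ⟨t, T'⟩
    · simpa [phiStr] using cover_phi s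
    · have : phiStr (s :: t :: T') = phi s ++ phiStr (t :: T') := by
        simp [phiStr]
      rw [this]
      exact cover_append (cover_phi s) (ih (by simp))

lemma len_phiStr (S : List Bool) : (phiStr S).length = 15 * S.length := by
  induction S with
  | nil => simp [phiStr]
  | cons s T ih =>
    have : phiStr (s :: T) = phi s ++ phiStr T := by simp [phiStr]
    rw [this, List.length_append, ih]
    cases s <;> simp [phi, phi0, phi1] <;> ring

theorem stmt17 (S : List Bool) (hS : S ≠ []) :
    IsCover [la, lb, la] (phiStr S) ∧ ¬ Superprimitive (phiStr S) := by
  have hc := cover_phiStr S hS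
  refine ⟨hc, ?_⟩
  intro hsp
  apply hsp
  refine ⟨[la, lb, la], hc, ?_⟩
  rw [len_phiStr]
  have : 1 ≤ S.length := List.length_pos_iff.mpr hS
  simp only [List.length_cons, List.length_nil]
  omega
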